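/- Let G be a group with infinite cyclic center Z(G), and suppose G ≅ H × ℤ for some group H. Then the image of the factor 1 × ℤ under this isomorphism equals Z(G); consequently G/Z(G) ≅ H. -/

import Mathlib

private lemma comap_equiv_center {G K : Type*} [Group G] [Group K] (e : G ≃* K) :
    Subgroup.comap e.toMonoidHom (Subgroup.center K) = Subgroup.center G := by
  ext x
  simp only [Subgroup.mem_comap, Subgroup.mem_center_iff]
  constructor
  · intro h g
    apply e.injective
    simpa [map_mul] using h (e g)
  · intro h k
    have := h (e.symm k)
    calc k * e x = e (e.symm k) * e x := by simp
    _ = e (e.symm k * x) := by rw [map_mul]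
    _ = e (x * e.symm k) := by rw [this]
    _ = e x * k := by rw [map_mul]; simp

private lemma trivial_of_prod_int {C : Type*} [Group C]
    (f : C × Multiplicative ℤ ≃* Multiplicative ℤ) (c : C) : c = 1 := by
  have hc : IsCyclic (C × Multiplicative ℤ) :=
    isCyclic_of_surjective f.symm f.symm.surjective
  obtain ⟨⟨g, n⟩, hg⟩ := hc.exists_generator
  obtain ⟨k, hk⟩ := hg (1, Multiplicative.ofAdd 1)
  have hfst : g ^ k = 1 := by have := congrArg Prod.fst hk; simpa using this
  have hsnd : n ^ k = Multiplicative.ofAdd 1 := by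
    have := congrArg Prod.snd hk; simpa using this
  have hn : k * n.toAdd = 1 := by
    have := congrArg Multiplicative.toAdd hsnd
    simpa [toAdd_zpow, smul_eq_mul] using this
  have hg1 : g = 1 := by
    rcases Int.mul_eq_one_iff_eq_one_or_neg_one.mp hn with ⟨h1, _⟩ | ⟨h1, _⟩
    · rw [h1] at hfst; simpa using hfst
    · rw [h1] at hfst; simpa [zpow_neg] using hfst
  obtain ⟨m, hm⟩ := hg (c, 1)
  have : g ^ m = c := by have := congrArg Prod.fst hm; simpa using this
  rw [← this, hg1, one_zpow]

theorem stmt_10 {G H : Type*} [Group G] [Group H]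
    (e : G ≃* H × Multiplicative ℤ)
    (hZ : Nonempty (Subgroup.center G ≃* Multiplicative ℤ)) :
    Subgroup.comap e.toMonoidHom ((⊥ : Subgroup H).prod ⊤) = Subgroup.center G ∧
      Nonempty (G ⧸ Subgroup.center G ≃* H) := by
  obtain ⟨ψ⟩ := hZ
  -- the subgroup (center H).prod ⊤ equals the center of H × ℤ
  have hcent' : (Subgroup.center H).prod (⊤ : Subgroup (Multiplicative ℤ)) =
      Subgroup.center (H × Multiplicative ℤ) := by
    ext ⟨h, n⟩
    simp only [Subgroup.mem_prod, Subgroup.mem_top, and_true, Subgroup.mem_center_iff]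
    constructor
    · intro hh ⟨h', n'⟩
      ext
      · exact hh h'
      · exact mul_comm n' n
    · intro hh h'
      exact congrArg Prod.fst (hh (h', 1))
  -- iso (center H) × ℤ ≃* ℤ
  have hmap : Subgroup.map e.symm.toMonoidHom (Subgroup.center (H × Multiplicative ℤ)) =
      Subgroup.center G := by
    rw [Subgroup.map_equiv_eq_comap_symm' e.symm, MulEquiv.symm_symm]
    exact comap_equiv_center e
  let f : Subgroup.center H × Multiplicative ℤ ≃* Multiplicative ℤ :=
    ((MulEquiv.refl _).prodCongr Subgroup.topEquiv.symm).trans <|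
      ((Subgroup.prodEquiv _ _).symm).trans <|
        (Subgroup.equivMapOfInjective _ e.symm.toMonoidHom e.symm.injective).trans <|
          ((MulEquiv.subgroupCongr (by rw [← hcent']) ).symm.trans
            (MulEquiv.subgroupCongr hmap)).trans ψ
  have hCH : ∀ c ∈ Subgroup.center H, c = 1 := by
    intro c hc
    have := trivial_of_prod_int f ⟨c, hc⟩
    exact congrArg Subtype.val this
  -- hence center (H × ℤ) = ⊥.prod ⊤
  have hcent : Subgroup.center (H × Multiplicative ℤ) =
      (⊥ : Subgroup H).prod ⊤ := by
    rw [← hcent']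
    congr 1
    rw [eq_bot_iff]
    intro c hc
    simpa [Subgroup.mem_bot] using hCH c hc
  have h1 : Subgroup.comap e.toMonoidHom ((⊥ : Subgroup H).prod ⊤) = Subgroup.center G := by
    rw [← hcent, comap_equiv_center]
  refine ⟨h1, ?_⟩
  let φ : G →* H := (MonoidHom.fst H (Multiplicative ℤ)).comp e.toMonoidHom
  have hker : φ.ker = Subgroup.center G := by
    rw [← h1]
    ext x
    simp [φ, MonoidHom.mem_ker, Subgroup.mem_comap, Subgroup.mem_prod]
    constructor
    · rintro ⟨a, rfl⟩
      simp
    · intro h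
      refine ⟨Multiplicative.toAdd (e x).2, ?_⟩
      rw [MulEquiv.symm_apply_eq]
      ext <;> simp [h]
  have hsurj : Function.Surjective φ := fun h => ⟨e.symm (h, 1), by simp [φ]⟩
  exact ⟨((QuotientGroup.quotientMulEquivOfEq hker.symm).trans
    (QuotientGroup.quotientKerEquivOfSurjective φ hsurj))⟩
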